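/- Let K̃ ∈ ℝ^{n×n} be symmetric with K̃ 1_n = 0 (a centered Gram matrix), let Y ∈ ℝ^{p×n}, let γ > 0, and set Ỹ = Y D with D = I_n − (1/n)·1_n 1_nᵀ. Let M ∈ ℝ^{2n×n} be the block matrix stacking K̃ on top of √(nγ)·I_n, and let P_M = M(MᵀM)⁻¹Mᵀ. Then M has full column rank n, and the infimum over Λ ∈ ℝ^{p×n} and b ∈ ℝ^p of (1/n)·Σ_{k=1}^n ‖Λ (K̃ e_k) + b − y_k‖² + γ‖Λ‖_F² equals (1/n)‖Ỹ‖_F² − (1/n)‖P_M U‖_F², where U ∈ ℝ^{2n×p} is the block matrix stacking Ỹᵀ on top of the n×p zero matrix. -/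

import Mathlib

open Matrix

namespace KRRAux

variable {m n q : Type*} [Fintype m] [Fintype n] [Fintype q]

/-- Frobenius inner product of two real matrices. -/
def ip (A B : Matrix m n ℝ) : ℝ := ∑ i, ∑ j, A i j * B i j

lemma ip_eq_trace (A B : Matrix m n ℝ) : ip A B = (Aᵀ * B).trace := by
  simp only [ip, Matrix.trace, Matrix.diag, Matrix.mul_apply, Matrix.transpose_apply]
  exact Finset.sum_comm

lemma ip_comm (A B : Matrix m n ℝ) : ip A B = ip B A := by
  simp [ip, mul_comm]

lemma ip_sub_left (A B C : Matrix m n ℝ) : ip (A - B) C = ip A C - ip B C := by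
  simp [ip, sub_mul, Finset.sum_sub_distrib]

lemma ip_sub_right (A B C : Matrix m n ℝ) : ip A (B - C) = ip A B - ip A C := by
  simp [ip, mul_sub, Finset.sum_sub_distrib]

lemma ip_mul (M : Matrix m q ℝ) (A : Matrix q n ℝ) (B : Matrix m n ℝ) :
    ip (M * A) B = ip A (Mᵀ * B) := by
  rw [ip_eq_trace, ip_eq_trace, Matrix.transpose_mul, Matrix.mul_assoc]

lemma ip_transpose (A B : Matrix m n ℝ) : ip Aᵀ Bᵀ = ip A B := by
  simp only [ip, Matrix.transpose_apply]
  exact Finset.sum_comm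

lemma ip_smul (c : ℝ) (A B : Matrix m n ℝ) : ip (c • A) (c • B) = (c * c) * ip A B := by
  simp only [ip, Matrix.smul_apply, smul_eq_mul, Finset.mul_sum]
  refine Finset.sum_congr rfl fun i _ => Finset.sum_congr rfl fun j _ => by ring

lemma ip_self_nonneg (A : Matrix m n ℝ) : 0 ≤ ip A A :=
  Finset.sum_nonneg fun i _ => Finset.sum_nonneg fun j _ => mul_self_nonneg _

lemma ip_fromRows (A C : Matrix m n ℝ) (B D : Matrix q n ℝ) :
    ip (Matrix.fromRows A B) (Matrix.fromRows C D) = ip A C + ip B D := by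
  simp [ip, Fintype.sum_sum_type]

lemma ip_sub_self (A B : Matrix m n ℝ) :
    ip (A - B) (A - B) = ip A A - 2 * ip A B + ip B B := by
  have h : ∀ i j, (A i j - B i j) * (A i j - B i j)
      = A i j * A i j - 2 * (A i j * B i j) + B i j * B i j := fun i j => by ring
  simp only [ip, Matrix.sub_apply]
  calc ∑ i, ∑ j, (A i j - B i j) * (A i j - B i j)
      = ∑ i, ∑ j, (A i j * A i j - 2 * (A i j * B i j) + B i j * B i j) :=
        Finset.sum_congr rfl fun i _ => Finset.sum_congr rfl fun j _ => h i j
    _ = _ := by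
        simp [Finset.sum_add_distrib, Finset.sum_sub_distrib, Finset.mul_sum]

lemma fromRows_sub (A C : Matrix m n ℝ) (B D : Matrix q n ℝ) :
    Matrix.fromRows A B - Matrix.fromRows C D = Matrix.fromRows (A - C) (B - D) := by
  ext i j
  cases i <;> simp

end KRRAux

open KRRAux

/-- (Lemma 1, single regressor.) For a symmetric centered Gram matrix `K̃`
(`K̃ 1ₙ = 0`), labels `Y ∈ ℝ^{p×n}`, ridge parameter `γ > 0`, `Ỹ = Y D`,
`M = [K̃; √(nγ) Iₙ] ∈ ℝ^{2n×n}` and `P_M = M(MᵀM)⁻¹Mᵀ`: `M` has full column rank `n`,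
and the regularized minimum MSE
`inf_{Λ,b} (1/n)Σₖ ‖Λ(K̃ eₖ) + b - yₖ‖² + γ‖Λ‖_F²` equals
`(1/n)‖Ỹ‖_F² - (1/n)‖P_M U‖_F²` where `U = [Ỹᵀ; 0]`. -/
theorem kernel_ridge_min_mse {n p : ℕ} (hn : 0 < n)
    (K : Matrix (Fin n) (Fin n) ℝ) (hKsymm : K.IsSymm)
    (hKcentered : K.mulVec (fun _ => (1 : ℝ)) = 0)
    (Y : Matrix (Fin p) (Fin n) ℝ) (γ : ℝ) (hγ : 0 < γ) :
    let D : Matrix (Fin n) (Fin n) ℝ := 1 - (n : ℝ)⁻¹ • Matrix.of (fun _ _ => (1 : ℝ))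
    let Yt : Matrix (Fin p) (Fin n) ℝ := Y * D
    let M : Matrix (Fin n ⊕ Fin n) (Fin n) ℝ :=
      Matrix.fromRows K (Real.sqrt (n * γ) • (1 : Matrix (Fin n) (Fin n) ℝ))
    let P : Matrix (Fin n ⊕ Fin n) (Fin n ⊕ Fin n) ℝ := M * (Mᵀ * M)⁻¹ * Mᵀ
    let U : Matrix (Fin n ⊕ Fin n) (Fin p) ℝ := Matrix.fromRows Ytᵀ 0
    M.rank = n ∧
    (⨅ Λ : Matrix (Fin p) (Fin n) ℝ, ⨅ b : Fin p → ℝ,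
        (n : ℝ)⁻¹ * (∑ k, ∑ j, (Λ.mulVec (fun i => K i k) j + b j - Y j k) ^ 2) +
          γ * ∑ j, ∑ i, (Λ j i) ^ 2) =
      (n : ℝ)⁻¹ * (∑ j, ∑ k, (Yt j k) ^ 2) -
        (n : ℝ)⁻¹ * (∑ i, ∑ j, ((P * U) i j) ^ 2) := by
  intro D Yt M P U
  have hnR : (0 : ℝ) < (n : ℝ) := by exact_mod_cast hn
  have hnγ : (0 : ℝ) < (n : ℝ) * γ := mul_pos hnR hγ
  set c : ℝ := Real.sqrt (n * γ) with hc
  have hc2 : c * c = (n : ℝ) * γ := Real.mul_self_sqrt hnγ.le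
  set G : Matrix (Fin n) (Fin n) ℝ := Mᵀ * M with hG
  -- MᵀM = KᵀK + nγ • 1
  have hMtM : G = Kᵀ * K + ((n : ℝ) * γ) • (1 : Matrix (Fin n) (Fin n) ℝ) := by
    show (Matrix.fromRows K (c • (1 : Matrix (Fin n) (Fin n) ℝ)))ᵀ *
        Matrix.fromRows K (c • (1 : Matrix (Fin n) (Fin n) ℝ)) = _
    rw [Matrix.transpose_fromRows, Matrix.fromCols_mul_fromRows]
    congr 1
    rw [Matrix.transpose_smul, Matrix.transpose_one, Matrix.smul_mul, Matrix.mul_smul,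
      Matrix.one_mul, smul_smul, hc2]
  have hGpd : G.PosDef := by
    rw [hMtM]
    refine Matrix.PosDef.posSemidef_add ?_ ?_
    · have := Matrix.posSemidef_conjTranspose_mul_self K
      rwa [Matrix.conjTranspose_eq_transpose_of_trivial] at this
    · rw [Matrix.smul_one_eq_diagonal]
      exact Matrix.posDef_diagonal_iff.mpr fun _ => hnγ
  have hGdet : IsUnit G.det := (Matrix.isUnit_iff_isUnit_det G).1 hGpd.isUnit
  have hGGinv : G * G⁻¹ = 1 := Matrix.mul_nonsing_inv G hGdet
  have hGsymm : Gᵀ = G := by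
    rw [hG, Matrix.transpose_mul, Matrix.transpose_transpose]
  have hGinvsymm : (G⁻¹)ᵀ = G⁻¹ := by
    rw [Matrix.transpose_nonsing_inv, hGsymm]
  have hrank : M.rank = n := by
    have h1 : (Mᵀ * M).rank = M.rank := Matrix.rank_transpose_mul_self M
    have h2 : G.rank = Fintype.card (Fin n) := Matrix.rank_of_isUnit G hGpd.isUnit
    rw [← h1, ← hG, h2, Fintype.card_fin]
  refine ⟨hrank, ?_⟩
  -- key projection facts
  have hMtP : Mᵀ * P = Mᵀ := by
    show Mᵀ * (M * G⁻¹ * Mᵀ) = Mᵀ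
    rw [Matrix.mul_assoc M G⁻¹ Mᵀ, ← Matrix.mul_assoc Mᵀ M (G⁻¹ * Mᵀ), ← hG,
      ← Matrix.mul_assoc G G⁻¹ Mᵀ, hGGinv, Matrix.one_mul]
  have hPsymm : Pᵀ = P := by
    show (M * G⁻¹ * Mᵀ)ᵀ = M * G⁻¹ * Mᵀ
    rw [Matrix.transpose_mul, Matrix.transpose_mul, Matrix.transpose_transpose,
      hGinvsymm, ← Matrix.mul_assoc]
  have hPP : P * P = P := by
    show (M * G⁻¹ * Mᵀ) * P = M * G⁻¹ * Mᵀ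
    rw [Matrix.mul_assoc (M * G⁻¹) Mᵀ P, hMtP]
  -- the optimal Λᵀ
  set Xs : Matrix (Fin n) (Fin p) ℝ := G⁻¹ * (Mᵀ * U) with hXs
  have hMXs : M * Xs = P * U := by
    rw [hXs, ← Matrix.mul_assoc, Matrix.mul_assoc (M * G⁻¹) Mᵀ U]
  -- the mean vector
  set ybar : Fin p → ℝ := fun j => (n : ℝ)⁻¹ * ∑ k, Y j k with hybar
  have hKrow : ∀ i, ∑ k, K i k = 0 := by
    intro i
    have := congrFun hKcentered i
    simpa [Matrix.mulVec, dotProduct] using this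
  have hYt : ∀ j k, Yt j k = Y j k - ybar j := by
    intro j k
    show (Y * D) j k = _
    simp only [Matrix.mul_apply, D, Matrix.sub_apply, Matrix.one_apply, Matrix.smul_apply,
      Matrix.of_apply, smul_eq_mul, mul_one, mul_sub]
    rw [Finset.sum_sub_distrib]
    congr 1
    · simp [mul_ite]
    · show ∑ x : Fin n, Y j x * (n : ℝ)⁻¹ = (n : ℝ)⁻¹ * ∑ k : Fin n, Y j k
      rw [Finset.mul_sum]
      exact Finset.sum_congr rfl fun x _ => mul_comm _ _
  have hYtrow : ∀ j, ∑ k, Yt j k = 0 := by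
    intro j
    have h : ∑ k, Yt j k = ∑ k, Y j k - (n : ℝ) * ybar j := by
      simp only [hYt, Finset.sum_sub_distrib, Finset.sum_const, Finset.card_univ,
        Fintype.card_fin, nsmul_eq_mul]
    rw [h, hybar]
    field_simp
    simp
  have hLKrow : ∀ (Λ : Matrix (Fin p) (Fin n) ℝ) j, ∑ k, (Λ * K) j k = 0 := by
    intro Λ j
    simp only [Matrix.mul_apply]
    rw [Finset.sum_comm]
    simp [← Finset.mul_sum, hKrow]
  set C : ℝ := (n : ℝ)⁻¹ * (∑ j, ∑ k, (Yt j k) ^ 2) -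
      (n : ℝ)⁻¹ * (∑ i, ∑ j, ((P * U) i j) ^ 2) with hC
  have hUU : ip U U = ∑ j, ∑ k, (Yt j k) ^ 2 := by
    show ip (Matrix.fromRows Ytᵀ 0) (Matrix.fromRows Ytᵀ 0) = _
    rw [ip_fromRows, ip_transpose]
    simp [ip, pow_two]
  have hPUU : ip (P * U) (P * U) = ∑ i, ∑ j, ((P * U) i j) ^ 2 := by
    simp [ip, pow_two]
  have hPUPU : ip (P * U) (P * U) = ip U (P * U) := by
    rw [ip_mul, ← Matrix.mul_assoc, hPsymm, hPP]
  -- master identity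
  have master : ∀ (Λ : Matrix (Fin p) (Fin n) ℝ) (b : Fin p → ℝ),
      (n : ℝ)⁻¹ * (∑ k, ∑ j, (Λ.mulVec (fun i => K i k) j + b j - Y j k) ^ 2) +
          γ * ∑ j, ∑ i, (Λ j i) ^ 2
        = C + (n : ℝ)⁻¹ * ip (M * Λᵀ - P * U) (M * Λᵀ - P * U)
            + ∑ j, (b j - ybar j) ^ 2 := by
    intro Λ b
    set E : Matrix (Fin p) (Fin n) ℝ := Λ * K - Yt with hE
    have stepa : (∑ k, ∑ j, (Λ.mulVec (fun i => K i k) j + b j - Y j k) ^ 2)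
        = ip E E + (n : ℝ) * ∑ j, (b j - ybar j) ^ 2 := by
      rw [Finset.sum_comm]
      have hterm : ∀ j k, Λ.mulVec (fun i => K i k) j + b j - Y j k
          = E j k + (b j - ybar j) := by
        intro j k
        simp only [hE, Matrix.sub_apply, Matrix.mul_apply, Matrix.mulVec, dotProduct,
          hYt]
        ring
      have hjsum : ∀ j, ∑ k, (E j k + (b j - ybar j)) ^ 2
          = (∑ k, E j k ^ 2) + (n : ℝ) * (b j - ybar j) ^ 2 := by
        intro j
        have hrow : ∑ k, E j k = 0 := by
          simp only [hE, Matrix.sub_apply, Finset.sum_sub_distrib, hLKrow Λ j, hYtrow j,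
            sub_zero]
        have hh : ∀ k : Fin n, (E j k + (b j - ybar j)) ^ 2
            = E j k ^ 2 + 2 * (b j - ybar j) * E j k + (b j - ybar j) ^ 2 := fun k => by ring
        rw [Finset.sum_congr rfl fun k _ => hh k, Finset.sum_add_distrib,
          Finset.sum_add_distrib, ← Finset.mul_sum, hrow, mul_zero, add_zero,
          Finset.sum_const, Finset.card_univ, Fintype.card_fin, nsmul_eq_mul]
      calc ∑ j, ∑ k, (Λ.mulVec (fun i => K i k) j + b j - Y j k) ^ 2
          = ∑ j, ((∑ k, E j k ^ 2) + (n : ℝ) * (b j - ybar j) ^ 2) := by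
            refine Finset.sum_congr rfl fun j _ => ?_
            rw [← hjsum j]
            exact Finset.sum_congr rfl fun k _ => by rw [hterm j k]
        _ = ip E E + (n : ℝ) * ∑ j, (b j - ybar j) ^ 2 := by
            rw [Finset.sum_add_distrib, ← Finset.mul_sum]
            congr 1
            simp [ip, pow_two]
    have hEt : M * Λᵀ - U = Matrix.fromRows Eᵀ (c • Λᵀ) := by
      have h1 : Eᵀ = K * Λᵀ - Ytᵀ := by
        rw [hE, Matrix.transpose_sub, Matrix.transpose_mul Λ K, hKsymm.eq]
      show Matrix.fromRows K (c • (1 : Matrix (Fin n) (Fin n) ℝ)) * Λᵀ -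
          Matrix.fromRows Ytᵀ 0 = _
      rw [Matrix.fromRows_mul, fromRows_sub, h1, Matrix.smul_mul, Matrix.one_mul, sub_zero]
    have stepb : ip E E + ((n : ℝ) * γ) * ip Λ Λ = ip (M * Λᵀ - U) (M * Λᵀ - U) := by
      rw [hEt, ip_fromRows, ip_transpose, ip_smul, hc2, ip_transpose]
    have hMtUP : Mᵀ * (U - P * U) = 0 := by
      rw [Matrix.mul_sub, ← Matrix.mul_assoc, hMtP, sub_self]
    have horth : ip (M * Λᵀ - P * U) (U - P * U) = 0 := by
      have h : M * Λᵀ - P * U = M * (Λᵀ - Xs) := by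
        rw [Matrix.mul_sub, hMXs]
      rw [h, ip_mul, hMtUP]
      simp [ip]
    have hVV : ip (U - P * U) (U - P * U) = ip U U - ip (P * U) (P * U) := by
      rw [ip_sub_self, ← hPUPU]
      ring
    have stepc : ip (M * Λᵀ - U) (M * Λᵀ - U)
        = ip (M * Λᵀ - P * U) (M * Λᵀ - P * U) + ip U U - ip (P * U) (P * U) := by
      have h1 : M * Λᵀ - U = (M * Λᵀ - P * U) - (U - P * U) := by abel
      rw [h1, ip_sub_self, horth, hVV]
      ring
    have hS2 : ∑ j, ∑ i, (Λ j i) ^ 2 = ip Λ Λ := by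
      simp [ip, pow_two]
    have hE2 : ip E E = ip (M * Λᵀ - P * U) (M * Λᵀ - P * U) + ip U U - ip (P * U) (P * U)
        - ((n : ℝ) * γ) * ip Λ Λ := by
      rw [← stepc, ← stepb]; ring
    rw [stepa, hS2, hE2, hC, ← hUU, ← hPUU]
    field_simp
    ring
  -- lower bound
  have hbdd : ∀ (Λ : Matrix (Fin p) (Fin n) ℝ) (b : Fin p → ℝ),
      C ≤ (n : ℝ)⁻¹ * (∑ k, ∑ j, (Λ.mulVec (fun i => K i k) j + b j - Y j k) ^ 2) +
          γ * ∑ j, ∑ i, (Λ j i) ^ 2 := by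
    intro Λ b
    rw [master Λ b]
    have h1 : 0 ≤ ip (M * Λᵀ - P * U) (M * Λᵀ - P * U) := ip_self_nonneg _
    have h2 : 0 ≤ ∑ j, (b j - ybar j) ^ 2 := Finset.sum_nonneg fun j _ => sq_nonneg _
    have h3 : 0 ≤ (n : ℝ)⁻¹ * ip (M * Λᵀ - P * U) (M * Λᵀ - P * U) :=
      mul_nonneg (inv_nonneg.mpr hnR.le) h1
    linarith
  refine le_antisymm ?_ (le_ciInf fun Λ => le_ciInf fun b => hbdd Λ b)
  refine ciInf_le_of_le ⟨C, ?_⟩ Xsᵀ ?_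
  · rintro x ⟨Λ, rfl⟩
    exact le_ciInf fun b => hbdd Λ b
  refine ciInf_le_of_le ⟨C, ?_⟩ ybar ?_
  · rintro x ⟨b, rfl⟩
    exact hbdd Xsᵀ b
  · rw [master Xsᵀ ybar, Matrix.transpose_transpose, hMXs, sub_self]
    simp [ip]
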